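/- Let r₀ ∈ ℝ, λ > 0, a ∈ (r₀, +∞], and let μ : [r₀,∞) → ℝ be non-increasing. Let β : [r₀,a) → ℝ be locally absolutely continuous with β(r₀) = β̄₋(r₀) and β'(r) = (β(r) − β̄₋(r))·(β(r) − β₊(r)) for almost every r ∈ [r₀,a). Then β(r) ≤ β̄₋(r) for every r ∈ [r₀,a). -/
import Mathlib


open MeasureTheory Filter Set intervalIntegral

/-- `β₋(r) = −μ(r)/2 − √(μ(r)²/4 + λ)`. -/
noncomputable def betaMinus (lam : ℝ) (μ : ℝ → ℝ) (r : ℝ) : ℝ :=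
  -μ r / 2 - Real.sqrt (μ r ^ 2 / 4 + lam)

/-- `β₊(r) = −μ(r)/2 + √(μ(r)²/4 + λ)`. -/
noncomputable def betaPlus (lam : ℝ) (μ : ℝ → ℝ) (r : ℝ) : ℝ :=
  -μ r / 2 + Real.sqrt (μ r ^ 2 / 4 + lam)

/-- `β̄₋(r) = limsup_{t→r} β₋(t)` (within the domain `[r₀,∞)`), the right-continuous
(upper semicontinuous) modification of `β₋`. -/
noncomputable def betaMinusBar (r₀ lam : ℝ) (μ : ℝ → ℝ) (r : ℝ) : ℝ :=
  Filter.limsup (betaMinus lam μ) (nhdsWithin r (Set.Ici r₀))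

open Topology

lemma sqrt_gt_half {lam : ℝ} (hlam : 0 < lam) (m : ℝ) :
    m / 2 < Real.sqrt (m ^ 2 / 4 + lam) := by
  rcases le_or_gt (m / 2) 0 with h | h
  · exact lt_of_le_of_lt h (Real.sqrt_pos.mpr (by positivity))
  · calc m / 2 = Real.sqrt ((m / 2) ^ 2) := (Real.sqrt_sq h.le).symm
    _ < Real.sqrt (m ^ 2 / 4 + lam) := Real.sqrt_lt_sqrt (by positivity) (by nlinarith)

lemma sqrt_gt_neg_half {lam : ℝ} (hlam : 0 < lam) (m : ℝ) :
    -m / 2 < Real.sqrt (m ^ 2 / 4 + lam) := by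
  have h := sqrt_gt_half hlam (-m)
  have e : (-m) ^ 2 / 4 + lam = m ^ 2 / 4 + lam := by ring
  rw [e] at h; linarith

lemma betaMinus_neg {lam : ℝ} (hlam : 0 < lam) (μ : ℝ → ℝ) (r : ℝ) :
    betaMinus lam μ r < 0 := by
  have := sqrt_gt_neg_half hlam (μ r)
  unfold betaMinus; linarith

lemma betaPlus_pos {lam : ℝ} (hlam : 0 < lam) (μ : ℝ → ℝ) (r : ℝ) :
    0 < betaPlus lam μ r := by
  have := sqrt_gt_half hlam (μ r)
  unfold betaPlus; linarith

lemma add_sqrt_mono {lam : ℝ} (hlam : 0 < lam) {m₁ m₂ : ℝ} (h : m₁ ≤ m₂) :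
    m₁ / 2 + Real.sqrt (m₁ ^ 2 / 4 + lam) ≤ m₂ / 2 + Real.sqrt (m₂ ^ 2 / 4 + lam) := by
  have h1 := sqrt_gt_neg_half hlam m₁
  have h2 := sqrt_gt_half hlam m₂
  have h3 := sqrt_gt_half hlam m₁
  have h4 := sqrt_gt_neg_half hlam m₂
  have e1 : Real.sqrt (m₁ ^ 2 / 4 + lam) ^ 2 = m₁ ^ 2 / 4 + lam :=
    Real.sq_sqrt (by positivity)
  have e2 : Real.sqrt (m₂ ^ 2 / 4 + lam) ^ 2 = m₂ ^ 2 / 4 + lam :=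
    Real.sq_sqrt (by positivity)
  nlinarith [mul_pos (show (0:ℝ) < m₁/2 + Real.sqrt (m₁^2/4+lam) by linarith)
    (show (0:ℝ) < Real.sqrt (m₂^2/4+lam) - m₂/2 by linarith)]

lemma sub_sqrt_anti {lam : ℝ} (hlam : 0 < lam) {m₁ m₂ : ℝ} (h : m₁ ≤ m₂) :
    Real.sqrt (m₂ ^ 2 / 4 + lam) - m₂ / 2 ≤ Real.sqrt (m₁ ^ 2 / 4 + lam) - m₁ / 2 := by
  have h1 := sqrt_gt_neg_half hlam m₁
  have h2 := sqrt_gt_half hlam m₂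
  have h3 := sqrt_gt_half hlam m₁
  have h4 := sqrt_gt_neg_half hlam m₂
  have e1 : Real.sqrt (m₁ ^ 2 / 4 + lam) ^ 2 = m₁ ^ 2 / 4 + lam :=
    Real.sq_sqrt (by positivity)
  have e2 : Real.sqrt (m₂ ^ 2 / 4 + lam) ^ 2 = m₂ ^ 2 / 4 + lam :=
    Real.sq_sqrt (by positivity)
  nlinarith [mul_pos (show (0:ℝ) < m₂/2 + Real.sqrt (m₂^2/4+lam) by linarith)
    (show (0:ℝ) < Real.sqrt (m₁^2/4+lam) - m₁/2 by linarith)]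

lemma betaMinus_monoOn {r₀ lam : ℝ} (hlam : 0 < lam) {μ : ℝ → ℝ}
    (hμ : AntitoneOn μ (Set.Ici r₀)) : MonotoneOn (betaMinus lam μ) (Set.Ici r₀) := by
  intro x hx y hy hxy
  have := add_sqrt_mono hlam (hμ hx hy hxy)
  unfold betaMinus; linarith

lemma betaPlus_monoOn {r₀ lam : ℝ} (hlam : 0 < lam) {μ : ℝ → ℝ}
    (hμ : AntitoneOn μ (Set.Ici r₀)) : MonotoneOn (betaPlus lam μ) (Set.Ici r₀) := by
  intro x hx y hy hxy
  have := sub_sqrt_anti hlam (hμ hx hy hxy)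
  unfold betaPlus; linarith

lemma betaMinusBar_le_betaMinus {r₀ lam : ℝ} (hlam : 0 < lam) {μ : ℝ → ℝ}
    (hμ : AntitoneOn μ (Set.Ici r₀)) {t x : ℝ} (ht : r₀ ≤ t) (htx : t < x) :
    betaMinusBar r₀ lam μ t ≤ betaMinus lam μ x := by
  have hmono := betaMinus_monoOn hlam hμ
  haveI : (𝓝[Set.Ici r₀] t).NeBot :=
    mem_closure_iff_nhdsWithin_neBot.mp (subset_closure ht)
  refine Filter.limsup_le_of_le (Filter.isCoboundedUnder_le_of_eventually_le
    (x := betaMinus lam μ r₀) _ ?_) ?_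
  · filter_upwards [eventually_mem_nhdsWithin] with y hy
    exact hmono self_mem_Ici hy hy
  · have h1 : ∀ᶠ y in 𝓝[Set.Ici r₀] t, y < x :=
      (eventually_lt_nhds htx).filter_mono nhdsWithin_le_nhds
    filter_upwards [h1, eventually_mem_nhdsWithin] with y hy1 hy2
    exact hmono hy2 (le_trans ht htx.le) hy1.le

lemma betaMinus_le_betaMinusBar {r₀ lam : ℝ} (hlam : 0 < lam) {μ : ℝ → ℝ}
    (hμ : AntitoneOn μ (Set.Ici r₀)) {t : ℝ} (ht : r₀ ≤ t) :
    betaMinus lam μ t ≤ betaMinusBar r₀ lam μ t := by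
  have hmono := betaMinus_monoOn hlam hμ
  haveI : (𝓝[Set.Ici t] t).NeBot :=
    mem_closure_iff_nhdsWithin_neBot.mp (subset_closure (Set.mem_Ici.mpr le_rfl))
  apply Filter.le_limsup_of_frequently_le
  · have h : ∀ᶠ y in 𝓝[Set.Ici t] t, betaMinus lam μ t ≤ betaMinus lam μ y := by
      filter_upwards [eventually_mem_nhdsWithin] with y hy
      exact hmono ht (le_trans ht hy) hy
    exact h.frequently.filter_mono (nhdsWithin_mono t (Set.Ici_subset_Ici.mpr ht))
  · refine ⟨betaMinus lam μ (t + 1), Filter.eventually_map.mpr ?_⟩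
    have h1 : ∀ᶠ y in 𝓝[Set.Ici r₀] t, y < t + 1 :=
      (eventually_lt_nhds (lt_add_one t)).filter_mono nhdsWithin_le_nhds
    filter_upwards [h1, eventually_mem_nhdsWithin] with y hy1 hy2
    exact hmono hy2 (le_trans ht (le_of_lt (lt_add_one t))) hy1.le

lemma betaMinusBar_mono {r₀ lam : ℝ} (hlam : 0 < lam) {μ : ℝ → ℝ}
    (hμ : AntitoneOn μ (Set.Ici r₀)) {t₁ t₂ : ℝ} (h1 : r₀ ≤ t₁) (h12 : t₁ ≤ t₂) :
    betaMinusBar r₀ lam μ t₁ ≤ betaMinusBar r₀ lam μ t₂ := by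
  rcases h12.lt_or_eq with h | h
  · exact (betaMinusBar_le_betaMinus hlam hμ h1 h).trans
      (betaMinus_le_betaMinusBar hlam hμ (h1.trans h12))
  · rw [h]

lemma betaMinusBar_nonpos {r₀ lam : ℝ} (hlam : 0 < lam) {μ : ℝ → ℝ}
    (hμ : AntitoneOn μ (Set.Ici r₀)) {t : ℝ} (ht : r₀ ≤ t) :
    betaMinusBar r₀ lam μ t ≤ 0 :=
  (betaMinusBar_le_betaMinus hlam hμ ht (lt_add_one t)).trans
    (betaMinus_neg hlam μ (t + 1)).le

/-- A locally absolutely continuous solution of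
`β' = (β − β̄₋)(β − β₊)` on `[r₀, a)` with `β(r₀) = β̄₋(r₀)` satisfies `β ≤ β̄₋`. -/
theorem riccati_solution_le_betaMinusBar
    (r₀ lam : ℝ) (hlam : 0 < lam)
    (a : EReal) (ha : (r₀ : EReal) < a)
    (μ : ℝ → ℝ) (hμ : AntitoneOn μ (Set.Ici r₀))
    (β β' : ℝ → ℝ)
    -- β is locally absolutely continuous on [r₀, a): it is the integral of a locally
    -- integrable function β'
    (hAC : ∀ r, r₀ ≤ r → (r : EReal) < a →
      IntervalIntegrable β' volume r₀ r ∧ β r = β r₀ + ∫ t in r₀..r, β' t)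
    -- β satisfies the ODE β' = (β − β̄₋)(β − β₊) almost everywhere on [r₀, a)
    (hode : ∀ᵐ t ∂(volume : Measure ℝ), r₀ ≤ t → (t : EReal) < a →
      β' t = (β t - betaMinusBar r₀ lam μ t) * (β t - betaPlus lam μ t))
    -- initial condition β(r₀) = β̄₋(r₀)
    (hinit : β r₀ = betaMinusBar r₀ lam μ r₀) :
    ∀ r, r₀ ≤ r → (r : EReal) < a → β r ≤ betaMinusBar r₀ lam μ r := by
  intro r₁ hr₁ hr₁a
  by_contra hcon
  push_neg at hcon
  set c := betaMinusBar r₀ lam μ r₁ with hc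
  have hβpmono := betaPlus_monoOn hlam hμ
  have hc0 : c ≤ 0 := betaMinusBar_nonpos hlam hμ hr₁
  have hp0 : 0 < betaPlus lam μ r₀ := betaPlus_pos hlam μ r₀
  obtain ⟨d, hcd, hdm⟩ := exists_between
    (lt_min hcon (lt_of_le_of_lt hc0 hp0) : c < min (β r₁) (betaPlus lam μ r₀))
  have hdβ : d < β r₁ := hdm.trans_le (min_le_left _ _)
  have hdp : d < betaPlus lam μ r₀ := hdm.trans_le (min_le_right _ _)
  have hmem : ∀ t, t ∈ Set.Icc r₀ r₁ → ((t : EReal) < a) := fun t htt =>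
    lt_of_le_of_lt (EReal.coe_le_coe_iff.mpr htt.2) hr₁a
  have hβeq : ∀ t ∈ Set.Icc r₀ r₁, β t = β r₀ + ∫ x in r₀..t, β' x := fun t htt =>
    (hAC t htt.1 (hmem t htt)).2
  have hint : IntervalIntegrable β' volume r₀ r₁ := (hAC r₁ hr₁ hr₁a).1
  have hFc : ContinuousOn (fun t => β r₀ + ∫ x in r₀..t, β' x) (Set.Icc r₀ r₁) := by
    apply continuousOn_const.add
    have h2 : IntegrableOn β' (Set.uIcc r₀ r₁) volume := by
      rw [Set.uIcc_of_le hr₁]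
      exact (intervalIntegrable_iff_integrableOn_Icc_of_le hr₁).mp hint
    have := intervalIntegral.continuousOn_primitive_interval h2
    rwa [Set.uIcc_of_le hr₁] at this
  have hβc : ContinuousOn β (Set.Icc r₀ r₁) := hFc.congr hβeq
  have hβr₀ : β r₀ ≤ c := by
    rw [hinit]; exact betaMinusBar_mono hlam hμ le_rfl hr₁
  -- first time u where β reaches d
  set T := Set.Icc r₀ r₁ ∩ β ⁻¹' Set.Ici d with hT
  have hTne : T.Nonempty := ⟨r₁, ⟨hr₁, le_rfl⟩, hdβ.le⟩
  have hTbdd : BddBelow T := ⟨r₀, fun t htt => htt.1.1⟩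
  have hTclosed : IsClosed T :=
    hβc.preimage_isClosed_of_isClosed isClosed_Icc isClosed_Ici
  set u := sInf T with hu
  have huT : u ∈ T := hTclosed.csInf_mem hTne hTbdd
  have hur₀ : r₀ ≤ u := huT.1.1
  have hur₁ : u ≤ r₁ := huT.1.2
  have hβu_ge : d ≤ β u := huT.2
  have hlt : ∀ t, r₀ ≤ t → t < u → β t < d := by
    intro t h1 h2
    by_contra hge
    push_neg at hge
    exact absurd (csInf_le hTbdd ⟨⟨h1, h2.le.trans hur₁⟩, hge⟩) (not_le.mpr h2)
  have hr₀u : r₀ < u := by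
    rcases hur₀.lt_or_eq with h | h
    · exact h
    · exfalso; rw [← h] at hβu_ge; linarith
  have hβu_le : β u ≤ d := by
    haveI : (𝓝[Set.Ico r₀ u] u).NeBot := by
      apply mem_closure_iff_nhdsWithin_neBot.mp
      rw [closure_Ico hr₀u.ne]
      exact ⟨hr₀u.le, le_rfl⟩
    have htend : Tendsto β (𝓝[Set.Ico r₀ u] u) (𝓝 (β u)) :=
      (hβc u ⟨hur₀, hur₁⟩).mono (fun x hx => ⟨hx.1, hx.2.le.trans hur₁⟩)
    exact le_of_tendsto htend
      (eventually_mem_nhdsWithin.mono fun x hx => (hlt x hx.1 hx.2).le)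
  have hβu : β u = d := le_antisymm hβu_le hβu_ge
  -- last time s ≤ u where β ≤ c
  set S := Set.Icc r₀ u ∩ β ⁻¹' Set.Iic c with hS
  have hSne : S.Nonempty := ⟨r₀, ⟨le_rfl, hr₀u.le⟩, hβr₀⟩
  have hSbdd : BddAbove S := ⟨u, fun t htt => htt.1.2⟩
  have hSclosed : IsClosed S :=
    ((hβc.mono (Set.Icc_subset_Icc le_rfl hur₁)).preimage_isClosed_of_isClosed
      isClosed_Icc isClosed_Iic)
  set s := sSup S with hs
  have hsS : s ∈ S := hSclosed.csSup_mem hSne hSbdd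
  have hsr₀ : r₀ ≤ s := hsS.1.1
  have hβs_le : β s ≤ c := hsS.2
  have hsu : s < u := by
    rcases hsS.1.2.lt_or_eq with h | h
    · exact h
    · exfalso; rw [h, hβu] at hβs_le; linarith
  have hsr₁ : s ≤ r₁ := hsu.le.trans hur₁
  have hgt : ∀ t, s < t → t ≤ u → c < β t := by
    intro t h1 h2
    by_contra hle
    push_neg at hle
    exact absurd (le_csSup hSbdd ⟨⟨hsr₀.trans h1.le, h2⟩, hle⟩) (not_le.mpr h1)
  -- integral identity
  have hintr₀s : IntervalIntegrable β' volume r₀ s := by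
    apply hint.mono_set
    rw [Set.uIcc_of_le hsr₀, Set.uIcc_of_le hr₁]
    exact Set.Icc_subset_Icc le_rfl hsr₁
  have hintr₀u : IntervalIntegrable β' volume r₀ u := by
    apply hint.mono_set
    rw [Set.uIcc_of_le hur₀, Set.uIcc_of_le hr₁]
    exact Set.Icc_subset_Icc le_rfl hur₁
  have keyint : β u - β s = ∫ x in s..u, β' x := by
    have h := intervalIntegral.integral_interval_sub_left hintr₀u hintr₀s
    rw [hβeq u ⟨hur₀, hur₁⟩, hβeq s ⟨hsr₀, hsr₁⟩]
    linarith [h]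
  have hnonpos : (∫ x in s..u, β' x) ≤ 0 := by
    rw [intervalIntegral.integral_of_le hsu.le]
    apply MeasureTheory.integral_nonpos_of_ae
    have h1 : ∀ᵐ t ∂(volume.restrict (Set.Ioc s u)), t ∈ Set.Ioc s u :=
      ae_restrict_mem measurableSet_Ioc
    have h2 := ae_restrict_of_ae (s := Set.Ioc s u) hode
    filter_upwards [h1, h2] with t htt hto
    have htr₀ : r₀ ≤ t := hsr₀.trans htt.1.le
    have htr₁ : t ≤ r₁ := htt.2.trans hur₁
    rw [Pi.zero_apply, hto htr₀ (hmem t ⟨htr₀, htr₁⟩)]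
    have f1 : 0 ≤ β t - betaMinusBar r₀ lam μ t := by
      have hb : betaMinusBar r₀ lam μ t ≤ c := betaMinusBar_mono hlam hμ htr₀ htr₁
      have := hgt t htt.1 htt.2
      linarith
    have f2 : β t - betaPlus lam μ t ≤ 0 := by
      have hb : betaPlus lam μ r₀ ≤ betaPlus lam μ t :=
        hβpmono Set.self_mem_Ici htr₀ htr₀
      have hd' : β t ≤ d := by
        rcases htt.2.lt_or_eq with h | h
        · exact (hlt t htr₀ h).le
        · rw [h, hβu]
      linarith
    exact mul_nonpos_of_nonneg_of_nonpos f1 f2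
  have : d ≤ c := by rw [← hβu]; linarith [keyint, hnonpos, hβs_le]
  linarith
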